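/- Every tensor in the image of P is completely traceless: for T in the image of P, T_{aab} = T_{aba} = T_{baa} = 0 (summing over a, for each b). -/

import Mathlib

abbrev Tens (N : ℕ) := Fin N → Fin N → Fin N → ℝ

noncomputable def ip {N : ℕ} (T U : Tens N) : ℝ := ∑ a, ∑ b, ∑ c, T a b c * U a b c

noncomputable def kd {N : ℕ} (i j : Fin N) : ℝ := if i = j then 1 else 0

/-- The explicit kernel of the projector P onto traceless mixed-symmetry tensors. -/
noncomputable def Pker (N : ℕ) (a1 a2 a3 b1 b2 b3 : Fin N) : ℝ :=
  (1/3 : ℝ) * (kd a1 b1 * kd a2 b2 * kd a3 b3 - kd a1 b3 * kd a2 b2 * kd a3 b1)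
  + (1/6 : ℝ) * (kd a1 b2 * kd a2 b1 * kd a3 b3 + kd a1 b1 * kd a2 b3 * kd a3 b2)
  - (1/6 : ℝ) * (kd a1 b2 * kd a2 b3 * kd a3 b1 + kd a1 b3 * kd a2 b1 * kd a3 b2)
  + (2 * ((N : ℝ) - 1))⁻¹ * (kd a1 b3 * kd a2 a3 * kd b1 b2 + kd a1 a2 * kd a3 b1 * kd b2 b3)
  - (2 * ((N : ℝ) - 1))⁻¹ * (kd a1 b1 * kd a2 a3 * kd b2 b3 + kd a1 a2 * kd a3 b3 * kd b1 b2)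

noncomputable def Pmap (N : ℕ) : Tens N →ₗ[ℝ] Tens N where
  toFun T := fun a1 a2 a3 => ∑ b1, ∑ b2, ∑ b3, Pker N a1 a2 a3 b1 b2 b3 * T b1 b2 b3
  map_add' T U := by
    funext a1 a2 a3
    simp [Pi.add_apply, mul_add, Finset.sum_add_distrib]
  map_smul' c T := by
    funext a1 a2 a3
    simp only [Pi.smul_apply, smul_eq_mul, Finset.mul_sum]
    refine Finset.sum_congr rfl fun b1 _ => Finset.sum_congr rfl fun b2 _ =>
      Finset.sum_congr rfl fun b3 _ => by simp only [RingHom.id_apply]; ring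

/-- A rank-3 tensor is completely traceless if all three of its traces vanish. -/
def Traceless {N : ℕ} (T : Tens N) : Prop :=
  ∀ b : Fin N, (∑ a, T a a b = 0) ∧ (∑ a, T a b a = 0) ∧ (∑ a, T b a a = 0)

lemma kd_symm {N : ℕ} (i j : Fin N) : kd i j = kd j i := by
  simp [kd, eq_comm]

lemma L1 {N : ℕ} (x y : Fin N) (c : ℝ) : ∑ a, kd a x * kd a y * c = kd x y * c := by
  simp only [kd, ite_mul, one_mul, zero_mul, Finset.sum_ite_eq', Finset.mem_univ, if_true]

lemma L2 {N : ℕ} (c : ℝ) : ∑ a : Fin N, kd a a * c = (N : ℝ) * c := by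
  simp [kd, Finset.sum_const, Finset.card_univ, mul_comm]

lemma hden (N : ℕ) (hN : 2 ≤ N) : (2 * ((N : ℝ) - 1)) ≠ 0 := by
  have : (2 : ℝ) ≤ (N : ℝ) := by exact_mod_cast hN
  intro h
  nlinarith

lemma tr1 (N : ℕ) (hN : 2 ≤ N) (b b1 b2 b3 : Fin N) :
    ∑ a, Pker N a a b b1 b2 b3 = 0 := by
  have key : ∀ a : Fin N, Pker N a a b b1 b2 b3 =
      kd a b1 * kd a b2 * ((1/3 : ℝ) * kd b b3)
      - kd a b3 * kd a b2 * ((1/3 : ℝ) * kd b b1)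
      + kd a b2 * kd a b1 * ((1/6 : ℝ) * kd b b3)
      + kd a b1 * kd a b3 * ((1/6 : ℝ) * kd b b2)
      - kd a b2 * kd a b3 * ((1/6 : ℝ) * kd b b1)
      - kd a b3 * kd a b1 * ((1/6 : ℝ) * kd b b2)
      + kd a b3 * kd a b * ((2 * ((N : ℝ) - 1))⁻¹ * kd b1 b2)
      + kd a a * ((2 * ((N : ℝ) - 1))⁻¹ * (kd b b1 * kd b2 b3))
      - kd a b1 * kd a b * ((2 * ((N : ℝ) - 1))⁻¹ * kd b2 b3)
      - kd a a * ((2 * ((N : ℝ) - 1))⁻¹ * (kd b b3 * kd b1 b2)) := by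
    intro a; simp only [Pker]; ring
  simp only [key, Finset.sum_add_distrib, Finset.sum_sub_distrib, L1, L2]
  rw [kd_symm b3 b2, kd_symm b2 b1, kd_symm b3 b1, kd_symm b3 b, kd_symm b1 b]
  have h := hden N hN
  have h' : ((N : ℝ) - 1) ≠ 0 := fun h0 => h (by rw [h0]; ring)
  field_simp
  ring

lemma tr2 (N : ℕ) (b b1 b2 b3 : Fin N) (a : Fin N) :
    Pker N a b a b1 b2 b3 = 0 := by
  simp only [Pker]
  rw [kd_symm b a]
  ring

lemma tr3 (N : ℕ) (hN : 2 ≤ N) (b b1 b2 b3 : Fin N) :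
    ∑ a, Pker N b a a b1 b2 b3 = 0 := by
  have key : ∀ a : Fin N, Pker N b a a b1 b2 b3 =
      kd a b2 * kd a b3 * ((1/3 : ℝ) * kd b b1)
      - kd a b2 * kd a b1 * ((1/3 : ℝ) * kd b b3)
      + kd a b1 * kd a b3 * ((1/6 : ℝ) * kd b b2)
      + kd a b3 * kd a b2 * ((1/6 : ℝ) * kd b b1)
      - kd a b3 * kd a b1 * ((1/6 : ℝ) * kd b b2)
      - kd a b1 * kd a b2 * ((1/6 : ℝ) * kd b b3)
      + kd a a * ((2 * ((N : ℝ) - 1))⁻¹ * (kd b b3 * kd b1 b2))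
      + kd a b * kd a b1 * ((2 * ((N : ℝ) - 1))⁻¹ * kd b2 b3)
      - kd a a * ((2 * ((N : ℝ) - 1))⁻¹ * (kd b b1 * kd b2 b3))
      - kd a b * kd a b3 * ((2 * ((N : ℝ) - 1))⁻¹ * kd b1 b2) := by
    intro a; simp only [Pker]; rw [kd_symm b a]; ring
  simp only [key, Finset.sum_add_distrib, Finset.sum_sub_distrib, L1, L2]
  rw [kd_symm b2 b3, kd_symm b2 b1, kd_symm b1 b3, kd_symm b3 b2, kd_symm b3 b1, kd_symm b1 b2]
  have h := hden N hN
  have h' : ((N : ℝ) - 1) ≠ 0 := fun h0 => h (by rw [h0]; ring)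
  field_simp
  ring

lemma swap_out {N : ℕ} (f : Fin N → Fin N → Fin N → Fin N → ℝ) (S : Tens N) :
    ∑ a, ∑ b1, ∑ b2, ∑ b3, f a b1 b2 b3 * S b1 b2 b3
      = ∑ b1, ∑ b2, ∑ b3, (∑ a, f a b1 b2 b3) * S b1 b2 b3 := by
  rw [Finset.sum_comm]
  refine Finset.sum_congr rfl fun b1 _ => ?_
  rw [Finset.sum_comm]
  refine Finset.sum_congr rfl fun b2 _ => ?_
  rw [Finset.sum_comm]
  refine Finset.sum_congr rfl fun b3 _ => ?_
  rw [Finset.sum_mul]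

theorem P_range_traceless (N : ℕ) (hN : 2 ≤ N) :
    ∀ T ∈ LinearMap.range (Pmap N), Traceless T := by
  rintro T ⟨S, rfl⟩ b
  refine ⟨?_, ?_, ?_⟩
  · show ∑ a, ∑ b1, ∑ b2, ∑ b3, Pker N a a b b1 b2 b3 * S b1 b2 b3 = 0
    rw [swap_out]
    simp [tr1 N hN b]
  · show ∑ a, ∑ b1, ∑ b2, ∑ b3, Pker N a b a b1 b2 b3 * S b1 b2 b3 = 0
    simp [tr2 N b]
  · show ∑ a, ∑ b1, ∑ b2, ∑ b3, Pker N b a a b1 b2 b3 * S b1 b2 b3 = 0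
    rw [swap_out]
    simp [tr3 N hN b]
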